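/- The identity $\Lambda_2' = -\omega\Lambda_2 + \Lambda_4 + \alpha\Lambda_6$ holds, i.e. $\int_{-\infty}^{\infty} R_0'(s)^2\,ds = -\omega\int_{-\infty}^{\infty} R_0(s)^2\,ds + \int_{-\infty}^{\infty} R_0(s)^4\,ds + \alpha\int_{-\infty}^{\infty} R_0(s)^6\,ds$. -/

import Mathlib

open MeasureTheory

open Real Filter Set Topology

noncomputable def DD (c k z : ℝ) : ℝ := 1 + c * Real.cosh (k * z)

lemma exp_le_two_mul_cosh (x : ℝ) : Real.exp x ≤ 2 * Real.cosh x := by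
  rw [Real.cosh_eq]; linarith [Real.exp_pos (-x)]

lemma DD_pos {c : ℝ} (hc : 0 < c) (k z : ℝ) : 0 < DD c k z := by
  have := Real.one_le_cosh (k * z); unfold DD; nlinarith

lemma one_le_DD {c : ℝ} (hc : 0 < c) (k z : ℝ) : 1 ≤ DD c k z := by
  have := Real.one_le_cosh (k * z); unfold DD; nlinarith

lemma abs_sinh_le_cosh (x : ℝ) : |Real.sinh x| ≤ Real.cosh x := by
  rw [abs_le, Real.sinh_eq, Real.cosh_eq]
  constructor <;> [linarith [Real.exp_pos x]; linarith [Real.exp_pos (-x)]]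

lemma c_abs_sinh_le_DD {c : ℝ} (hc : 0 < c) (k z : ℝ) :
    c * |Real.sinh (k * z)| ≤ DD c k z := by
  have h := abs_sinh_le_cosh (k * z)
  unfold DD; nlinarith

lemma DD_ge_exp {c k : ℝ} (hc : 0 < c) (hk : 0 < k) (z : ℝ) :
    c / 2 * Real.exp (k * |z|) ≤ DD c k z := by
  have h : Real.exp |k * z| ≤ 2 * Real.cosh (k * z) := by
    rw [← Real.cosh_abs]; exact exp_le_two_mul_cosh _
  rw [abs_mul, abs_of_pos hk] at h
  unfold DD; nlinarith

lemma inv_DD_le {c k : ℝ} (hc : 0 < c) (hk : 0 < k) (z : ℝ) :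
    (DD c k z)⁻¹ ≤ 2 / c * Real.exp (-(k * |z|)) := by
  have h1 := DD_ge_exp hc hk z
  have h2 : 0 < c / 2 * Real.exp (k * |z|) := by positivity
  calc (DD c k z)⁻¹ ≤ (c / 2 * Real.exp (k * |z|))⁻¹ := inv_anti₀ h2 h1
    _ = 2 / c * Real.exp (-(k * |z|)) := by rw [mul_inv, Real.exp_neg]; ring

lemma integrable_exp_neg_abs {k : ℝ} (hk : 0 < k) :
    Integrable (fun z : ℝ => Real.exp (-(k * |z|))) := by
  have hf : IntegrableOn (fun z : ℝ => Real.exp (-k * z)) (Ioi 0) :=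
    exp_neg_integrableOn_Ioi 0 hk
  have hIoi : IntegrableOn (fun z : ℝ => Real.exp (-(k * |z|))) (Ioi 0) := by
    apply hf.congr_fun (fun x hx => ?_) measurableSet_Ioi
    rw [abs_of_pos hx]; ring_nf
  have hIic : IntegrableOn (fun z : ℝ => Real.exp (-(k * |z|))) (Iic 0) := by
    rw [← Measure.map_neg_eq_self (volume : Measure ℝ)]
    have m : MeasurableEmbedding fun x : ℝ => -x :=
      (Homeomorph.neg ℝ).measurableEmbedding
    rw [m.integrableOn_map_iff]
    simp_rw [Function.comp_def, abs_neg, neg_preimage, neg_Iic, neg_zero]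
    exact (integrableOn_Ici_iff_integrableOn_Ioi).mpr hIoi
  have := hIic.union hIoi
  rwa [Iic_union_Ioi, integrableOn_univ] at this

lemma continuous_DD (c k : ℝ) : Continuous (fun z => DD c k z) := by
  unfold DD; continuity

lemma integrable_inv_DD {c k : ℝ} (hc : 0 < c) (hk : 0 < k) :
    Integrable (fun z : ℝ => (DD c k z)⁻¹) := by
  apply ((integrable_exp_neg_abs hk).const_mul (2 / c)).mono'
  · exact ((continuous_DD c k).inv₀ (fun z => (DD_pos hc k z).ne')).aestronglyMeasurable
  · filter_upwards with z
    rw [Real.norm_eq_abs, abs_of_pos (inv_pos.mpr (DD_pos hc k z))]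
    exact inv_DD_le hc hk z

lemma hasDerivAt_DD (c k z : ℝ) :
    HasDerivAt (fun z => DD c k z) (c * k * Real.sinh (k * z)) z := by
  have h1 : HasDerivAt (fun z : ℝ => k * z) k z := by
    simpa using (hasDerivAt_id z).const_mul k
  have h2 : HasDerivAt (fun z : ℝ => Real.cosh (k * z)) (Real.sinh (k * z) * k) z :=
    (Real.hasDerivAt_cosh (k * z)).comp z h1
  have h3 := (h2.const_mul c).const_add 1
  exact h3.congr_deriv (by ring)

lemma tendsto_DD_atTop' {c k : ℝ} (hc : 0 < c) (hk : 0 < k) {l : Filter ℝ}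
    (habs : Tendsto (fun z : ℝ => |z|) l atTop) :
    Tendsto (fun z => DD c k z) l atTop := by
  apply tendsto_atTop_mono (fun z => DD_ge_exp hc hk z)
  apply Tendsto.const_mul_atTop (by positivity : (0:ℝ) < c / 2)
  exact Real.tendsto_exp_atTop.comp (habs.const_mul_atTop hk)

noncomputable def gg (ω c k z : ℝ) : ℝ :=
  -(2 * ω * c * k) * Real.sinh (k * z) / (DD c k z) ^ 2

lemma hasDerivAt_gg {ω α β c k : ℝ} (hc : 0 < c)
    (hc2 : c ^ 2 = 1 - β) (hk2 : k ^ 2 = 4 * ω) (hαω : α * ω = -(3 / 16) * β) (z : ℝ) :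
    HasDerivAt (fun z => gg ω c k z)
      (4 * ω ^ 2 * c ^ 2 * Real.sinh (k * z) ^ 2 / DD c k z ^ 3
        + ω * (4 * ω / DD c k z) - (4 * ω / DD c k z) ^ 2
        - α * (4 * ω / DD c k z) ^ 3) z := by
  have hDne : DD c k z ≠ 0 := (DD_pos hc k z).ne'
  have h1 : HasDerivAt (fun z : ℝ => k * z) k z := by
    simpa using (hasDerivAt_id z).const_mul k
  have hn : HasDerivAt (fun z : ℝ => -(2 * ω * c * k) * Real.sinh (k * z))
      (-(2 * ω * c * k) * (Real.cosh (k * z) * k)) z :=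
    ((Real.hasDerivAt_sinh (k * z)).comp z h1).const_mul _
  have hd : HasDerivAt (fun z : ℝ => (DD c k z) ^ 2)
      (2 * DD c k z ^ 1 * (c * k * Real.sinh (k * z))) z := (hasDerivAt_DD c k z).pow 2
  have hdne : (DD c k z) ^ 2 ≠ 0 := pow_ne_zero _ hDne
  have h := hn.div hd hdne
  refine h.congr_deriv ?_
  symm
  set C := Real.cosh (k * z) with hCdef
  set S := Real.sinh (k * z) with hSdef
  have hC : C ^ 2 = 1 + S ^ 2 := Real.cosh_sq' (k * z)
  have hDdef : DD c k z = 1 + c * C := rfl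
  set D := DD c k z with hDD
  have hnum : -(2 * ω * c * k) * (C * k) * D ^ 2
        - -(2 * ω * c * k) * S * (2 * D ^ 1 * (c * k * S))
      = (4 * ω ^ 2 * c ^ 2 * S ^ 2 + 4 * ω ^ 2 * D ^ 2 - 16 * ω ^ 2 * D
          - 64 * α * ω ^ 3) * D := by
    rw [hDdef]
    linear_combination (-2 * ω * c * C * (1 + c * C) ^ 2 + 4 * ω * c ^ 2 * S ^ 2 * (1 + c * C)) * hk2
      + (-12 * ω ^ 2 * c ^ 2 * (1 + c * C)) * hC
      + (-12 * ω ^ 2 * (1 + c * C)) * hc2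
      + (64 * ω ^ 2 * (1 + c * C)) * hαω
  rw [hnum, show ((D : ℝ) ^ 2) ^ 2 = D ^ 3 * D by ring, mul_div_mul_right _ _ hDne]
  field_simp
  ring

lemma deriv_R_sq {ω c k : ℝ} (hω : 0 < ω) (hc : 0 < c) (hk2 : k ^ 2 = 4 * ω) (z : ℝ) :
    deriv (fun z => Real.sqrt (4 * ω / DD c k z)) z ^ 2
      = 4 * ω ^ 2 * c ^ 2 * Real.sinh (k * z) ^ 2 / DD c k z ^ 3 := by
  have hDpos := DD_pos hc k z
  have hu : HasDerivAt (fun z => 4 * ω / DD c k z)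
      ((0 * DD c k z - 4 * ω * (c * k * Real.sinh (k * z))) / (DD c k z) ^ 2) z :=
    (hasDerivAt_const z (4 * ω)).div (hasDerivAt_DD c k z) hDpos.ne'
  have hupos : 0 < 4 * ω / DD c k z := by positivity
  have hR := hu.sqrt hupos.ne'
  rw [hR.deriv]
  have hs : Real.sqrt (4 * ω / DD c k z) ^ 2 = 4 * ω / DD c k z :=
    Real.sq_sqrt hupos.le
  have hspos : 0 < Real.sqrt (4 * ω / DD c k z) := Real.sqrt_pos.mpr hupos
  set s := Real.sqrt (4 * ω / DD c k z)
  set S := Real.sinh (k * z)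
  set D := DD c k z
  field_simp at hs ⊢
  linear_combination (16 * ω ^ 2 * c ^ 2 * S ^ 2) * hk2 - (16 * ω ^ 2 * c ^ 2 * S ^ 2) * hs

set_option maxHeartbeats 1000000 in
/-- `Λ₂' = -ω Λ₂ + Λ₄ + α Λ₆`, i.e.
`∫ R₀'² = -ω ∫ R₀² + ∫ R₀⁴ + α ∫ R₀⁶`. -/
theorem stmt2 (ω α β : ℝ) (hω : 0 < ω) (hβ : β = -(16 / 3) * α * ω)
    (hβ0 : 0 ≤ β) (hβ1 : β < 1)
    (R0 : ℝ → ℝ)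
    (hR0 : ∀ z : ℝ, R0 z =
      Real.sqrt (4 * ω / (1 + Real.sqrt (1 - β) * Real.cosh (2 * Real.sqrt ω * z)))) :
    (∫ s : ℝ, (deriv R0 s) ^ 2) =
      -ω * (∫ s : ℝ, (R0 s) ^ 2) + (∫ s : ℝ, (R0 s) ^ 4) + α * ∫ s : ℝ, (R0 s) ^ 6 := by
  have h1β : (0:ℝ) < 1 - β := by linarith
  set c := Real.sqrt (1 - β) with hc_def
  set k := 2 * Real.sqrt ω with hk_def
  have hc : 0 < c := Real.sqrt_pos.mpr h1β
  have hk : 0 < k := by rw [hk_def]; positivity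
  have hc2 : c ^ 2 = 1 - β := Real.sq_sqrt h1β.le
  have hk2 : k ^ 2 = 4 * ω := by
    rw [hk_def, mul_pow, Real.sq_sqrt hω.le]; ring
  have hαω : α * ω = -(3 / 16) * β := by rw [hβ]; ring
  have hfun : R0 = fun z => Real.sqrt (4 * ω / DD c k z) := funext fun z => by
    rw [hR0 z]; rfl
  subst hfun
  have hDpos : ∀ z, 0 < DD c k z := DD_pos hc k
  have hA2 : ∀ z, Real.sqrt (4 * ω / DD c k z) ^ 2 = 4 * ω / DD c k z := fun z =>
    Real.sq_sqrt (div_pos (by linarith) (hDpos z)).le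
  -- rewrite the four integrals into explicit form
  have e0 : (∫ s : ℝ, (deriv (fun z => Real.sqrt (4 * ω / DD c k z)) s) ^ 2)
      = ∫ s : ℝ, 4 * ω ^ 2 * c ^ 2 * Real.sinh (k * s) ^ 2 / DD c k s ^ 3 :=
    integral_congr_ae (ae_of_all _ fun s => deriv_R_sq hω hc hk2 s)
  have e2 : (∫ s : ℝ, Real.sqrt (4 * ω / DD c k s) ^ 2) = ∫ s : ℝ, 4 * ω / DD c k s :=
    integral_congr_ae (ae_of_all _ fun s => hA2 s)
  have e4 : (∫ s : ℝ, Real.sqrt (4 * ω / DD c k s) ^ 4)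
      = ∫ s : ℝ, (4 * ω / DD c k s) ^ 2 :=
    integral_congr_ae (ae_of_all _ fun s => by
      show Real.sqrt (4 * ω / DD c k s) ^ 4 = (4 * ω / DD c k s) ^ 2
      rw [show (Real.sqrt (4 * ω / DD c k s)) ^ 4
          = ((Real.sqrt (4 * ω / DD c k s)) ^ 2) ^ 2 by ring, hA2 s])
  have e6 : (∫ s : ℝ, Real.sqrt (4 * ω / DD c k s) ^ 6)
      = ∫ s : ℝ, (4 * ω / DD c k s) ^ 3 :=
    integral_congr_ae (ae_of_all _ fun s => by
      show Real.sqrt (4 * ω / DD c k s) ^ 6 = (4 * ω / DD c k s) ^ 3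
      rw [show (Real.sqrt (4 * ω / DD c k s)) ^ 6
          = ((Real.sqrt (4 * ω / DD c k s)) ^ 2) ^ 3 by ring, hA2 s])
  rw [e0, e2, e4, e6]
  -- integrability
  have hID := integrable_inv_DD hc hk
  have hcont2 : Continuous (fun z => 4 * ω / DD c k z) :=
    continuous_const.div (continuous_DD c k) (fun z => (hDpos z).ne')
  have hI2 : Integrable (fun z : ℝ => 4 * ω / DD c k z) := by
    have := hID.const_mul (4 * ω)
    simpa [div_eq_mul_inv] using this
  have h2nonneg : ∀ z, 0 ≤ 4 * ω / DD c k z := fun z =>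
    (div_pos (by linarith) (hDpos z)).le
  have hle2 : ∀ z, 4 * ω / DD c k z ≤ 4 * ω := fun z =>
    div_le_self (by linarith) (one_le_DD hc k z)
  have hI4 : Integrable (fun z : ℝ => (4 * ω / DD c k z) ^ 2) := by
    apply (hI2.const_mul (4 * ω)).mono' (hcont2.pow 2).aestronglyMeasurable
    filter_upwards with z
    rw [Real.norm_eq_abs, Pi.pow_apply, abs_of_nonneg (pow_nonneg (h2nonneg z) 2)]
    nlinarith [hle2 z, h2nonneg z]
  have hI6 : Integrable (fun z : ℝ => (4 * ω / DD c k z) ^ 3) := by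
    apply (hI2.const_mul (16 * ω ^ 2)).mono' (hcont2.pow 3).aestronglyMeasurable
    filter_upwards with z
    rw [Real.norm_eq_abs, Pi.pow_apply, abs_of_nonneg (pow_nonneg (h2nonneg z) 3)]
    nlinarith [hle2 z, h2nonneg z,
      mul_le_mul (hle2 z) (hle2 z) (h2nonneg z) (by linarith : (0:ℝ) ≤ 4 * ω)]
  have hcontS : Continuous fun z : ℝ => Real.sinh (k * z) :=
    Real.continuous_sinh.comp (continuous_const.mul continuous_id)
  have hI' : Integrable (fun z : ℝ => 4 * ω ^ 2 * c ^ 2 * Real.sinh (k * z) ^ 2 / DD c k z ^ 3) := by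
    apply (hID.const_mul (4 * ω ^ 2)).mono'
    · exact ((continuous_const.mul (hcontS.pow 2)).div ((continuous_DD c k).pow 3)
        (fun z => pow_ne_zero 3 (hDpos z).ne')).aestronglyMeasurable
    · filter_upwards with z
      have hD := hDpos z
      have h1 := c_abs_sinh_le_DD hc k z
      have h2 : c ^ 2 * Real.sinh (k * z) ^ 2 ≤ DD c k z ^ 2 := by
        nlinarith [abs_nonneg (Real.sinh (k * z)), sq_abs (Real.sinh (k * z)),
          mul_self_le_mul_self (mul_nonneg hc.le (abs_nonneg (Real.sinh (k * z)))) h1]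
      rw [Real.norm_eq_abs, abs_of_nonneg (by positivity)]
      rw [div_le_iff₀ (by positivity)]
      have h3 : 4 * ω ^ 2 * (DD c k z)⁻¹ * DD c k z ^ 3 = 4 * ω ^ 2 * DD c k z ^ 2 := by
        field_simp
      rw [h3]
      nlinarith
  have J1 : Integrable (fun z : ℝ =>
      4 * ω ^ 2 * c ^ 2 * Real.sinh (k * z) ^ 2 / DD c k z ^ 3
        + ω * (4 * ω / DD c k z)) := by
    exact hI'.add (hI2.const_mul ω)
  have J2 : Integrable (fun z : ℝ =>
      4 * ω ^ 2 * c ^ 2 * Real.sinh (k * z) ^ 2 / DD c k z ^ 3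
        + ω * (4 * ω / DD c k z) - (4 * ω / DD c k z) ^ 2) := by
    exact J1.sub hI4
  have hIF : Integrable (fun z : ℝ =>
      4 * ω ^ 2 * c ^ 2 * Real.sinh (k * z) ^ 2 / DD c k z ^ 3
        + ω * (4 * ω / DD c k z) - (4 * ω / DD c k z) ^ 2
        - α * (4 * ω / DD c k z) ^ 3) := by
    exact J2.sub (hI6.const_mul α)
  -- tendsto of gg to 0
  have hgabs : ∀ z, ‖gg ω c k z‖ ≤ 2 * ω * k * (DD c k z)⁻¹ := fun z => by
    have hD := hDpos z
    have h1 := c_abs_sinh_le_DD hc k z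
    rw [Real.norm_eq_abs]
    unfold gg
    rw [abs_div, abs_of_pos (pow_pos hD 2), abs_mul, abs_neg,
      abs_of_pos (by positivity : (0:ℝ) < 2 * ω * c * k)]
    rw [div_le_iff₀ (pow_pos hD 2)]
    have h3 : 2 * ω * k * (DD c k z)⁻¹ * DD c k z ^ 2 = 2 * ω * k * DD c k z := by
      field_simp
    rw [h3]
    nlinarith [mul_le_mul_of_nonneg_left h1 (by positivity : (0:ℝ) ≤ 2 * ω * k),
      abs_nonneg (Real.sinh (k * z))]
  have hinvtop : Tendsto (fun z => (DD c k z)⁻¹) atTop (𝓝 0) :=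
    (tendsto_DD_atTop' hc hk tendsto_abs_atTop_atTop).inv_tendsto_atTop
  have hinvbot : Tendsto (fun z => (DD c k z)⁻¹) atBot (𝓝 0) :=
    (tendsto_DD_atTop' hc hk tendsto_abs_atBot_atTop).inv_tendsto_atTop
  have htop : Tendsto (fun z => gg ω c k z) atTop (𝓝 0) := by
    apply squeeze_zero_norm hgabs
    have h := hinvtop.const_mul (2 * ω * k)
    rw [mul_zero] at h
    exact h
  have hbot : Tendsto (fun z => gg ω c k z) atBot (𝓝 0) := by
    apply squeeze_zero_norm hgabs
    have h := hinvbot.const_mul (2 * ω * k)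
    rw [mul_zero] at h
    exact h
  have hg := fun z => hasDerivAt_gg (ω := ω) (α := α) (β := β) hc hc2 hk2 hαω z
  have hIoi : (∫ x in Ioi (0:ℝ),
      (4 * ω ^ 2 * c ^ 2 * Real.sinh (k * x) ^ 2 / DD c k x ^ 3
        + ω * (4 * ω / DD c k x) - (4 * ω / DD c k x) ^ 2
        - α * (4 * ω / DD c k x) ^ 3)) = 0 - gg ω c k 0 :=
    integral_Ioi_of_hasDerivAt_of_tendsto' (fun x _ => hg x) hIF.integrableOn htop
  have hIic : (∫ x in Iic (0:ℝ),
      (4 * ω ^ 2 * c ^ 2 * Real.sinh (k * x) ^ 2 / DD c k x ^ 3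
        + ω * (4 * ω / DD c k x) - (4 * ω / DD c k x) ^ 2
        - α * (4 * ω / DD c k x) ^ 3)) = gg ω c k 0 - 0 :=
    integral_Iic_of_hasDerivAt_of_tendsto' (fun x _ => hg x) hIF.integrableOn hbot
  have hsum := intervalIntegral.integral_Iic_add_Ioi (b := (0:ℝ)) hIF.integrableOn hIF.integrableOn
  have hF0 : (∫ z : ℝ,
      (4 * ω ^ 2 * c ^ 2 * Real.sinh (k * z) ^ 2 / DD c k z ^ 3
        + ω * (4 * ω / DD c k z) - (4 * ω / DD c k z) ^ 2
        - α * (4 * ω / DD c k z) ^ 3)) = 0 := by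
    rw [← hsum, hIoi, hIic]; ring
  have hsplit : (∫ z : ℝ,
      (4 * ω ^ 2 * c ^ 2 * Real.sinh (k * z) ^ 2 / DD c k z ^ 3
        + ω * (4 * ω / DD c k z) - (4 * ω / DD c k z) ^ 2
        - α * (4 * ω / DD c k z) ^ 3))
      = (∫ z : ℝ, 4 * ω ^ 2 * c ^ 2 * Real.sinh (k * z) ^ 2 / DD c k z ^ 3)
        + ω * (∫ z : ℝ, 4 * ω / DD c k z)
        - (∫ z : ℝ, (4 * ω / DD c k z) ^ 2)
        - α * (∫ z : ℝ, (4 * ω / DD c k z) ^ 3) := by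
    rw [integral_sub J2 (hI6.const_mul α),
      integral_sub J1 hI4,
      integral_add hI' (hI2.const_mul ω),
      integral_const_mul, integral_const_mul]
  rw [hsplit] at hF0
  linarith
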